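/- For every k ≥ 2 and every unitary U ∈ U(d^n), the quantity ‖U‖_{P^k}^{2^k} := E_{h₁,…,h_k ∈ F_d^{2n}} d^{−n} tr(∂_{h_k}⋯∂_{h₁} U) is a nonnegative real number, and F_{C^{(k−1)}}(U)^{2^k} ≤ ‖U‖_{P^k}^{2^k}; equivalently, F_{C^{(k−1)}}(U) ≤ ‖U‖_{P^k}. -/

import Mathlib

open Matrix Complex

namespace CH

variable (d n : ℕ) [NeZero d]

/-- Phase space `F_d^{2n}`, written as pairs `(u, v)` with `u, v ∈ F_d^n`. -/
abbrev PSpace := (Fin n → ZMod d) × (Fin n → ZMod d)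

/-- Linear maps on `ℂ^{F_d^n}`, as matrices. -/
abbrev Mat := Matrix (Fin n → ZMod d) (Fin n → ZMod d) ℂ

/-- `ω = e^{2πi/d}`. -/
noncomputable def omg : ℂ := Complex.exp (2 * Real.pi * Complex.I / d)

/-- `τ = (-1)^d e^{iπ/d}`. -/
noncomputable def tau : ℂ := (-1 : ℂ) ^ d * Complex.exp (Real.pi * Complex.I / d)

/-- `D = 2d` if `d = 2`, else `D = d`. -/
def Dd : ℕ := if d = 2 then 4 else d

/-- The translation operator `X^v`, with `X^v |u⟩ = |u + v⟩`. -/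
noncomputable def Xop (v : Fin n → ZMod d) : Mat d n :=
  Matrix.of fun u u' => if u = u' + v then 1 else 0

/-- The phase operator `Z^v`, with `Z^v |u⟩ = ω^{u·v} |u⟩`. -/
noncomputable def Zop (v : Fin n → ZMod d) : Mat d n :=
  Matrix.diagonal fun u => omg d ^ (∑ i, u i * v i : ZMod d).val

/-- The Weyl operator `W_{(u,v)} = τ^{-(|u₁v₁| + ⋯ + |uₙvₙ|)} Z^u X^v`. -/
noncomputable def Weyl (a : PSpace d n) : Mat d n :=
  tau d ^ (-(∑ i, ((a.1 i * a.2 i).val : ℤ))) • (Zop d n a.1 * Xop d n a.2)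

/-- Normalized trace inner product `⟨A,B⟩ = d^{-n} tr(A* B)`. -/
noncomputable def trInner (A B : Mat d n) : ℂ := ((d : ℂ) ^ n)⁻¹ * (Aᴴ * B).trace

/-- Normalized Frobenius norm `‖A‖₂ = ⟨A,A⟩^{1/2}`. -/
noncomputable def hsNorm (A : Mat d n) : ℝ := Real.sqrt (trInner d n A A).re

/-- Pauli derivative `∂_h U = W_h U W_h* U*`. -/
noncomputable def pderiv (h : PSpace d n) (U : Mat d n) : Mat d n :=
  Weyl d n h * U * (Weyl d n h)ᴴ * Uᴴ

/-- The quantity `‖U‖_{P^k}^{2^k} = E_{h₁,…,h_k} d^{-n} tr(∂_{h_k} ⋯ ∂_{h₁} U)`. -/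
noncomputable def pq : ℕ → Mat d n → ℂ
  | 0, U => ((d : ℂ) ^ n)⁻¹ * U.trace
  | (k+1), U => ((d : ℂ) ^ (2*n))⁻¹ * ∑ h : PSpace d n, pq k (pderiv d n h U)

/-- The `k`-th Pauli uniformity norm `‖U‖_{P^k}`, the `2^k`-th root of `pq k U`. -/
noncomputable def pnorm (k : ℕ) (U : Mat d n) : ℝ := (pq d n k U).re ^ (((2:ℝ) ^ k)⁻¹)

/-- The Pauli group `C^{(1)} = {τ^p W_h : p ∈ Z_D, h ∈ F_d^{2n}}`. -/
def pauliGroup : Set (Mat d n) :=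
  {U | ∃ (p : ℕ) (h : PSpace d n), U = tau d ^ p • Weyl d n h}

/-- The Clifford hierarchy. -/
def cliff : ℕ → Set (Mat d n)
  | 0 => {U | ∃ θ : ℝ, U = Complex.exp (θ * Complex.I) • (1 : Mat d n)}
  | 1 => pauliGroup d n
  | (k+2) => {U | U ∈ unitary (Mat d n) ∧
      ∀ P ∈ pauliGroup d n, U * P * Uᴴ ∈ cliff (k+1)}

/-- Pauli polynomials of degree at most `k`. -/
def ppoly : ℕ → Set (Mat d n)
  | 0 => {U | ∃ θ : ℝ, U = Complex.exp (θ * Complex.I) • (1 : Mat d n)}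
  | (k+1) => {U | U ∈ unitary (Mat d n) ∧ ∀ h : PSpace d n, pderiv d n h U ∈ ppoly k}

/-- Symplectic form `[(u,v),(u',v')] = u·v' - u'·v` on `F_d^{2n}`. -/
def symp (a b : PSpace d n) : ZMod d :=
  (∑ i, a.1 i * b.2 i) - (∑ i, b.1 i * a.2 i)

/-- Multiplication of the Heisenberg group. -/
def heisMul (β : PSpace d n → PSpace d n → ZMod (Dd d))
    (x y : ZMod (Dd d) × PSpace d n) : ZMod (Dd d) × PSpace d n :=
  (x.1 + y.1 + β x.2 y.2, x.2 + y.2)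


section Lemmas
set_option linter.unusedSectionVars false

lemma d_ne_zero : (d : ℂ) ≠ 0 := Nat.cast_ne_zero.2 (NeZero.ne d)

lemma omg_pow_d : omg d ^ d = 1 := by
  rw [omg, ← Complex.exp_nat_mul]
  rw [mul_div_cancel₀ _ (d_ne_zero d)]
  simpa using Complex.exp_int_mul_two_pi_mul_I 1

lemma omg_pow_mod (a : ℕ) : omg d ^ a = omg d ^ (a % d) := by
  conv_lhs => rw [← Nat.mod_add_div a d, pow_add, pow_mul, omg_pow_d, one_pow, mul_one]

lemma tau_eq_exp : tau d = Complex.exp ((d * Real.pi + Real.pi / d) * Complex.I) := by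
  rw [tau, show ((-1:ℂ)) = Complex.exp (Real.pi * Complex.I) by simp [Complex.exp_pi_mul_I],
    ← Complex.exp_nat_mul, ← Complex.exp_add]
  ring_nf

lemma tau_ne_zero : tau d ≠ 0 := by rw [tau_eq_exp]; exact Complex.exp_ne_zero _

lemma tau_zpow_exp (z : ℤ) : tau d ^ z = Complex.exp ((z * (d * Real.pi + Real.pi / d)) * Complex.I) := by
  rw [tau_eq_exp, ← Complex.exp_int_mul]
  ring_nf

lemma tau_sq : tau d ^ (2:ℕ) = omg d := by
  have h := tau_zpow_exp d 2
  rw [show tau d ^ (2:ℕ) = tau d ^ (2:ℤ) from (zpow_natCast _ 2).symm, h, omg]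
  rw [show ((2:ℤ):ℂ) * ((d:ℂ) * Real.pi + Real.pi / d) * Complex.I
      = ((d:ℤ):ℂ) * (2 * Real.pi * Complex.I) + 2 * Real.pi * Complex.I / d by
    push_cast
    have hd := d_ne_zero d
    field_simp]
  rw [Complex.exp_add, Complex.exp_int_mul_two_pi_mul_I, one_mul]

lemma tau_pow_two_d : tau d ^ ((2 * d : ℕ) : ℤ) = 1 := by
  rw [tau_zpow_exp]
  rw [show (((2 * d : ℕ) : ℤ) : ℂ) * ((d:ℂ) * Real.pi + Real.pi / d) * Complex.I
      = ((d * d + 1 : ℕ) : ℤ) * (2 * Real.pi * Complex.I) by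
    push_cast
    have hd := d_ne_zero d
    field_simp]
  exact Complex.exp_int_mul_two_pi_mul_I _

lemma tau_zpow_eq_pow (z : ℤ) : ∃ p : ℕ, tau d ^ z = tau d ^ p := by
  have hD : (0:ℤ) < ((2*d : ℕ) : ℤ) := by
    have := NeZero.pos d; positivity
  refine ⟨(z % ((2*d:ℕ):ℤ)).toNat, ?_⟩
  have hz : z = ((2*d:ℕ):ℤ) * (z / ((2*d:ℕ):ℤ)) + z % ((2*d:ℕ):ℤ) := (Int.mul_ediv_add_emod _ _).symm
  have hnn : 0 ≤ z % ((2*d:ℕ):ℤ) := Int.emod_nonneg z (by omega)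
  calc tau d ^ z = (tau d ^ ((2*d:ℕ):ℤ)) ^ (z / ((2*d:ℕ):ℤ)) * tau d ^ (z % ((2*d:ℕ):ℤ)) := by
        rw [← _root_.zpow_mul, ← zpow_add₀ (tau_ne_zero d), ← hz]
    _ = tau d ^ (z % ((2*d:ℕ):ℤ)) := by rw [tau_pow_two_d]; simp
    _ = tau d ^ (z % ((2*d:ℕ):ℤ)).toNat := by rw [← zpow_natCast, Int.toNat_of_nonneg hnn]

lemma abs_tau_zpow (z : ℤ) : ‖tau d ^ z‖ = 1 := by
  have h2 : ((z:ℂ) * ((d:ℂ) * Real.pi + Real.pi / d) * Complex.I)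
      = (((z * (d * Real.pi + Real.pi / d) : ℝ)) : ℂ) * Complex.I := by
    push_cast; ring
  rw [tau_zpow_exp, h2, Complex.norm_exp]
  simp

lemma conj_tau_zpow (z : ℤ) : (starRingEnd ℂ) (tau d ^ z) = tau d ^ (-z) := by
  have h1 : tau d ^ z * tau d ^ (-z) = 1 := by
    rw [← zpow_add₀ (tau_ne_zero d)]; simp
  have h2 : (starRingEnd ℂ) (tau d ^ z) * tau d ^ z = 1 := by
    rw [mul_comm, Complex.mul_conj]
    norm_cast
    rw [Complex.normSq_eq_norm_sq, abs_tau_zpow]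
    norm_num
  calc (starRingEnd ℂ) (tau d ^ z) = (starRingEnd ℂ) (tau d ^ z) * (tau d ^ z * tau d ^ (-z)) := by
        rw [h1, mul_one]
    _ = tau d ^ (-z) := by rw [← mul_assoc, h2, one_mul]

/-- The additive character `ζ(c) = ω^{|c|}`. -/
noncomputable def ze (c : ZMod d) : ℂ := omg d ^ c.val

lemma ze_zero : ze d 0 = 1 := by simp [ze]

lemma ze_add (a b : ZMod d) : ze d (a + b) = ze d a * ze d b := by
  rw [ze, ze, ze, ← pow_add, ZMod.val_add, ← omg_pow_mod]

lemma ze_mul_neg (c : ZMod d) : ze d c * ze d (-c) = 1 := by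
  rw [← ze_add]; simp [ze_zero]

lemma ze_eq_tau_zpow (c : ZMod d) : ze d c = tau d ^ ((2 * c.val : ℕ) : ℤ) := by
  rw [ze, ← tau_sq, ← pow_mul, ← zpow_natCast]

lemma conj_ze (c : ZMod d) : (starRingEnd ℂ) (ze d c) = ze d (-c) := by
  have h1 : (starRingEnd ℂ) (ze d c) * ze d c = 1 := by
    rw [ze_eq_tau_zpow, conj_tau_zpow, ← zpow_add₀ (tau_ne_zero d)]
    simp
  calc (starRingEnd ℂ) (ze d c) = (starRingEnd ℂ) (ze d c) * (ze d c * ze d (-c)) := by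
        rw [ze_mul_neg]; ring
    _ = ze d (-c) := by rw [← mul_assoc, h1, one_mul]

lemma ze_sum (ι : Type*) (s : Finset ι) (f : ι → ZMod d) :
    ze d (∑ i ∈ s, f i) = ∏ i ∈ s, ze d (f i) := by
  classical
  induction s using Finset.cons_induction with
  | empty => simp [ze_zero]
  | cons a s ha ih => rw [Finset.sum_cons, Finset.prod_cons, ze_add, ih]

lemma omg_ne_one (hd : 2 ≤ d) : omg d ≠ 1 := by
  intro h
  rw [omg, Complex.exp_eq_one_iff] at h
  obtain ⟨m, hm⟩ := h
  have hpi : (2 * (Real.pi : ℂ) * Complex.I) ≠ 0 := by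
    simp [Real.pi_ne_zero, Complex.I_ne_zero]
  have hd0 := d_ne_zero d
  have hmul := congrArg (fun z : ℂ => z * d) hm
  simp only [div_mul_cancel₀ _ hd0] at hmul
  have h2 : (1 : ℂ) * (2 * (Real.pi : ℂ) * Complex.I) = (m * d) * (2 * (Real.pi : ℂ) * Complex.I) := by
    rw [one_mul]; linear_combination hmul
  have h3 : (1 : ℤ) = m * d := by exact_mod_cast mul_right_cancel₀ hpi h2
  have hdvd : (d : ℤ) ∣ 1 := ⟨m, by linarith⟩
  have := Int.le_of_dvd one_pos hdvd
  omega

lemma sum_ze_univ (hd : d.Prime) : ∑ t : ZMod d, ze d t = 0 := by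
  have h2 : ∑ t : ZMod d, ze d t = ∑ i ∈ Finset.range d, omg d ^ i := by
    refine Finset.sum_nbij (fun t => t.val) (fun t _ => Finset.mem_range.2 (ZMod.val_lt t))
      (fun a _ b _ hab => ZMod.val_injective d hab) ?_ (fun t _ => rfl)
    intro i hi
    simp only [Finset.coe_univ, Set.image_univ, Set.mem_range]
    exact ⟨(i : ZMod d), ZMod.val_cast_of_lt (Finset.mem_range.1 hi)⟩
  rw [h2, geom_sum_eq (omg_ne_one d hd.two_le), omg_pow_d]
  simp

lemma sum_ze_mul (hd : d.Prime) (c : ZMod d) (hc : c ≠ 0) :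
    ∑ t : ZMod d, ze d (c * t) = 0 := by
  haveI : Fact d.Prime := ⟨hd⟩
  rw [Fintype.sum_equiv (Equiv.mulLeft₀ c hc) (fun t => ze d (c * t)) (fun t => ze d t)
    (fun t => by simp [Equiv.mulLeft₀_apply])]
  exact sum_ze_univ d hd

lemma sum_ze_ip (hd : d.Prime) (c : Fin n → ZMod d) :
    ∑ u : Fin n → ZMod d, ze d (∑ i, c i * u i) =
      if c = 0 then ((d : ℂ) ^ n) else 0 := by
  have h1 : ∀ u : Fin n → ZMod d, ze d (∑ i, c i * u i) = ∏ i, ze d (c i * u i) :=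
    fun u => ze_sum d _ _ _
  simp only [h1]
  rw [← Fintype.prod_sum (fun i t => ze d (c i * t))]
  by_cases hc : c = 0
  · subst hc
    simp [ze_zero, Finset.card_univ, ZMod.card d]
  · rw [if_neg hc]
    obtain ⟨i0, hi0⟩ : ∃ i, c i ≠ 0 := by
      by_contra h
      push_neg at h
      exact hc (funext h)
    exact Finset.prod_eq_zero (Finset.mem_univ i0) (sum_ze_mul d hd (c i0) hi0)

-- Matrix entry lemmas ---------------------------------------------------

variable (n : ℕ)

lemma Zop_eq (u : Fin n → ZMod d) :
    Zop d n u = Matrix.diagonal (fun a => ze d (∑ i, a i * u i)) := rfl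

lemma ip_add_left (a u w : Fin n → ZMod d) :
    (∑ i, (u i + w i) * a i) = (∑ i, u i * a i) + ∑ i, w i * a i := by
  rw [← Finset.sum_add_distrib]; congr 1; funext i; ring

lemma ip_add_right (a u w : Fin n → ZMod d) :
    (∑ i, a i * (u i + w i)) = (∑ i, a i * u i) + ∑ i, a i * w i := by
  rw [← Finset.sum_add_distrib]; congr 1; funext i; ring

lemma ip_neg_right (a u : Fin n → ZMod d) :
    (∑ i, a i * (-u) i) = -(∑ i, a i * u i) := by
  rw [← Finset.sum_neg_distrib]; congr 1; funext i; simp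

lemma Xop_mul (v w : Fin n → ZMod d) : Xop d n v * Xop d n w = Xop d n (v + w) := by
  ext a b
  rw [Matrix.mul_apply]
  rw [Finset.sum_eq_single (b + w)]
  · show (if a = b + w + v then (1:ℂ) else 0) * (if b + w = b + w then 1 else 0)
        = if a = b + (v + w) then 1 else 0
    have hbw : b + w + v = b + (v + w) := by abel
    rw [if_pos rfl, mul_one, hbw]
  · intro c _ hc
    show (if a = c + v then (1:ℂ) else 0) * (if c = b + w then 1 else 0) = 0
    rw [if_neg hc, mul_zero]
  · intro h
    exact absurd (Finset.mem_univ _) h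

lemma Xop_zero : Xop d n 0 = 1 := by
  ext a b
  show (if a = b + 0 then (1:ℂ) else 0) = _
  rw [add_zero, Matrix.one_apply]

lemma Zop_mul (u w : Fin n → ZMod d) : Zop d n u * Zop d n w = Zop d n (u + w) := by
  rw [Zop_eq, Zop_eq, Zop_eq, Matrix.diagonal_mul_diagonal]
  exact congrArg Matrix.diagonal (funext fun a => by
    simp only [Pi.add_apply]
    rw [ip_add_right, ze_add])

lemma Zop_zero : Zop d n 0 = 1 := by
  have h : (fun a : Fin n → ZMod d => ze d (∑ i, a i * (0 : Fin n → ZMod d) i))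
      = fun _ => (1:ℂ) := by
    funext a
    simp [ze_zero]
  rw [Zop_eq, h, Matrix.diagonal_one]

lemma Zop_conjTranspose (u : Fin n → ZMod d) : (Zop d n u)ᴴ = Zop d n (-u) := by
  rw [Zop_eq, Zop_eq, Matrix.diagonal_conjTranspose]
  exact congrArg Matrix.diagonal (funext fun a => by
    show (starRingEnd ℂ) (ze d (∑ i, a i * u i)) = ze d (∑ i, a i * (-u) i)
    rw [conj_ze, ← ip_neg_right])

lemma Xop_conjTranspose (v : Fin n → ZMod d) : (Xop d n v)ᴴ = Xop d n (-v) := by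
  ext a b
  show (starRingEnd ℂ) (if b = a + v then (1:ℂ) else 0) = if a = b + -v then (1:ℂ) else 0
  rw [apply_ite (starRingEnd ℂ), RingHom.map_one, RingHom.map_zero]
  refine if_congr ?_ rfl rfl
  constructor
  · intro h; rw [h]; abel
  · intro h; rw [h]; abel

lemma Xop_mul_Zop (v u : Fin n → ZMod d) :
    Xop d n v * Zop d n u = ze d (-(∑ i, v i * u i)) • (Zop d n u * Xop d n v) := by
  ext a b
  rw [Matrix.smul_apply, Zop_eq, Matrix.mul_diagonal, Matrix.diagonal_mul]
  show (if a = b + v then (1:ℂ) else 0) * ze d (∑ i, b i * u i)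
      = ze d (-(∑ i, v i * u i)) * (ze d (∑ i, a i * u i) * if a = b + v then 1 else 0)
  by_cases h : a = b + v
  · rw [if_pos h, h, one_mul, mul_one]
    rw [show (∑ i, (b + v) i * u i) = (∑ i, b i * u i) + ∑ i, v i * u i from ip_add_left d n u b v]
    rw [ze_add]
    rw [show ze d (-(∑ i, v i * u i)) * (ze d (∑ i, b i * u i) * ze d (∑ i, v i * u i))
        = (ze d (∑ i, v i * u i) * ze d (-(∑ i, v i * u i))) * ze d (∑ i, b i * u i) by ring]
    rw [ze_mul_neg, one_mul]
  · rw [if_neg h]; ring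

/-- The integer phase exponent in the Weyl operator. -/
def sph (a : PSpace d n) : ℤ := ∑ i, ((a.1 i * a.2 i).val : ℤ)

lemma Weyl_eq (a : PSpace d n) :
    Weyl d n a = tau d ^ (-(sph d n a)) • (Zop d n a.1 * Xop d n a.2) := rfl

lemma Zop_mul_Xop_eq_Weyl (a : PSpace d n) :
    Zop d n a.1 * Xop d n a.2 = tau d ^ (sph d n a) • Weyl d n a := by
  rw [Weyl_eq, smul_smul, ← zpow_add₀ (tau_ne_zero d)]
  simp

lemma Weyl_mul (a b : PSpace d n) :
    ∃ z : ℤ, Weyl d n a * Weyl d n b = tau d ^ z • Weyl d n (a + b) := by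
  refine ⟨-sph d n a + -sph d n b + ((2 * ((-(∑ i, a.2 i * b.1 i) : ZMod d)).val : ℕ) : ℤ)
      + sph d n (a + b), ?_⟩
  rw [Weyl_eq d n a, Weyl_eq d n b, Matrix.smul_mul, Matrix.mul_smul, smul_smul]
  rw [show Zop d n a.1 * Xop d n a.2 * (Zop d n b.1 * Xop d n b.2)
      = Zop d n a.1 * (Xop d n a.2 * Zop d n b.1) * Xop d n b.2 by
    simp only [Matrix.mul_assoc]]
  rw [Xop_mul_Zop, Matrix.mul_smul, Matrix.smul_mul, smul_smul]
  rw [show Zop d n a.1 * (Zop d n b.1 * Xop d n a.2) * Xop d n b.2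
      = (Zop d n a.1 * Zop d n b.1) * (Xop d n a.2 * Xop d n b.2) by
    simp only [Matrix.mul_assoc]]
  rw [Zop_mul, Xop_mul]
  have hW := Zop_mul_Xop_eq_Weyl d n (a + b)
  rw [show (a + b).1 = a.1 + b.1 from rfl, show (a + b).2 = a.2 + b.2 from rfl] at hW
  rw [hW, smul_smul]
  have hz : ze d (-(∑ i, a.2 i * b.1 i))
      = tau d ^ ((2 * ((-(∑ i, a.2 i * b.1 i) : ZMod d)).val : ℕ) : ℤ) := by
    rw [ze_eq_tau_zpow]
  rw [hz, ← zpow_add₀ (tau_ne_zero d), ← zpow_add₀ (tau_ne_zero d), ← zpow_add₀ (tau_ne_zero d)]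

lemma Weyl_zero : Weyl d n 0 = 1 := by
  rw [Weyl_eq]
  rw [show sph d n 0 = 0 by simp [sph]]
  rw [show (0 : PSpace d n).1 = 0 from rfl, show (0 : PSpace d n).2 = 0 from rfl,
    Zop_zero, Xop_zero, one_mul]
  simp

lemma Weyl_star_mul_self (h : PSpace d n) : (Weyl d n h)ᴴ * Weyl d n h = 1 := by
  rw [Weyl_eq, Matrix.conjTranspose_smul, Matrix.smul_mul, Matrix.mul_smul, smul_smul]
  rw [Matrix.conjTranspose_mul, Zop_conjTranspose, Xop_conjTranspose]
  rw [show Xop d n (-h.2) * Zop d n (-h.1) * (Zop d n h.1 * Xop d n h.2)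
      = Xop d n (-h.2) * (Zop d n (-h.1) * Zop d n h.1) * Xop d n h.2 by
    simp only [Matrix.mul_assoc]]
  rw [Zop_mul, neg_add_cancel, Zop_zero, Matrix.mul_one, Xop_mul, neg_add_cancel, Xop_zero]
  have hc : star (tau d ^ (-sph d n h)) * tau d ^ (-sph d n h) = 1 := by
    rw [show (star (tau d ^ (-sph d n h)) : ℂ) = (starRingEnd ℂ) (tau d ^ (-sph d n h)) from rfl,
      conj_tau_zpow, ← zpow_add₀ (tau_ne_zero d)]
    simp
  rw [hc, one_smul]

lemma Weyl_mul_star_self (h : PSpace d n) : Weyl d n h * (Weyl d n h)ᴴ = 1 := by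
  rw [Weyl_eq, Matrix.conjTranspose_smul, Matrix.smul_mul, Matrix.mul_smul, smul_smul]
  rw [Matrix.conjTranspose_mul, Zop_conjTranspose, Xop_conjTranspose]
  rw [show Zop d n h.1 * Xop d n h.2 * (Xop d n (-h.2) * Zop d n (-h.1))
      = Zop d n h.1 * (Xop d n h.2 * Xop d n (-h.2)) * Zop d n (-h.1) by
    simp only [Matrix.mul_assoc]]
  rw [Xop_mul, add_neg_cancel, Xop_zero, Matrix.mul_one, Zop_mul, add_neg_cancel, Zop_zero]
  have hc : tau d ^ (-sph d n h) * star (tau d ^ (-sph d n h)) = 1 := by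
    rw [show (star (tau d ^ (-sph d n h)) : ℂ) = (starRingEnd ℂ) (tau d ^ (-sph d n h)) from rfl,
      conj_tau_zpow, ← zpow_add₀ (tau_ne_zero d)]
    simp
  rw [hc, one_smul]

lemma Weyl_mem_unitary (h : PSpace d n) : Weyl d n h ∈ unitary (Mat d n) := by
  constructor
  · rw [Matrix.star_eq_conjTranspose]; exact Weyl_star_mul_self d n h
  · rw [Matrix.star_eq_conjTranspose]; exact Weyl_mul_star_self d n h

lemma Weyl_conjTranspose (a : PSpace d n) :
    ∃ z : ℤ, (Weyl d n a)ᴴ = tau d ^ z • Weyl d n (-a) := by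
  obtain ⟨z, hz⟩ := Weyl_mul d n a (-a)
  refine ⟨-z, ?_⟩
  calc (Weyl d n a)ᴴ = (Weyl d n a)ᴴ * (tau d ^ (-z) • (Weyl d n a * Weyl d n (-a))) := by
        rw [hz, smul_smul, ← zpow_add₀ (tau_ne_zero d)]
        simp [add_neg_cancel, Weyl_zero]
    _ = tau d ^ (-z) • (((Weyl d n a)ᴴ * Weyl d n a) * Weyl d n (-a)) := by
        rw [Matrix.mul_smul, Matrix.mul_assoc]
    _ = tau d ^ (-z) • Weyl d n (-a) := by rw [Weyl_star_mul_self, one_mul]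

lemma tau_zpow_eq_exp_real (z : ℤ) :
    ∃ θ : ℝ, tau d ^ z = Complex.exp ((θ : ℝ) * Complex.I) := by
  refine ⟨z * (d * Real.pi + Real.pi / d), ?_⟩
  rw [tau_zpow_exp]
  congr 1
  push_cast
  ring

lemma mem_pauliGroup_zpow (z : ℤ) (a : PSpace d n) :
    tau d ^ z • Weyl d n a ∈ pauliGroup d n := by
  obtain ⟨p, hp⟩ := tau_zpow_eq_pow d z
  exact ⟨p, a, by rw [← hp]⟩

lemma Weyl_mem_pauliGroup (a : PSpace d n) : Weyl d n a ∈ pauliGroup d n :=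
  ⟨0, a, by simp⟩

lemma mem_pauliGroup_iff (P : Mat d n) :
    P ∈ pauliGroup d n ↔ ∃ (z : ℤ) (a : PSpace d n), P = tau d ^ z • Weyl d n a := by
  constructor
  · rintro ⟨p, a, rfl⟩
    exact ⟨(p : ℤ), a, by rw [zpow_natCast]⟩
  · rintro ⟨z, a, rfl⟩
    exact mem_pauliGroup_zpow d n z a

lemma tau_zpow_mul_conj (z : ℤ) : tau d ^ z * star (tau d ^ z) = 1 := by
  rw [show (star (tau d ^ z) : ℂ) = (starRingEnd ℂ) (tau d ^ z) from rfl,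
    conj_tau_zpow, ← zpow_add₀ (tau_ne_zero d)]
  simp

lemma pauliGroup_mul {P Q : Mat d n} (hP : P ∈ pauliGroup d n) (hQ : Q ∈ pauliGroup d n) :
    P * Q ∈ pauliGroup d n := by
  rw [mem_pauliGroup_iff] at hP hQ ⊢
  obtain ⟨z1, a, rfl⟩ := hP
  obtain ⟨z2, b, rfl⟩ := hQ
  obtain ⟨z3, hz3⟩ := Weyl_mul d n a b
  refine ⟨z1 + z2 + z3, a + b, ?_⟩
  rw [Matrix.smul_mul, Matrix.mul_smul, smul_smul, hz3, smul_smul,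
    ← zpow_add₀ (tau_ne_zero d), ← zpow_add₀ (tau_ne_zero d)]

lemma pauliGroup_star {P : Mat d n} (hP : P ∈ pauliGroup d n) : Pᴴ ∈ pauliGroup d n := by
  rw [mem_pauliGroup_iff] at hP ⊢
  obtain ⟨z, a, rfl⟩ := hP
  obtain ⟨z2, hz2⟩ := Weyl_conjTranspose d n a
  refine ⟨-z + z2, -a, ?_⟩
  rw [Matrix.conjTranspose_smul, hz2, smul_smul,
    show (star (tau d ^ z) : ℂ) = (starRingEnd ℂ) (tau d ^ z) from rfl, conj_tau_zpow,
    ← zpow_add₀ (tau_ne_zero d)]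

lemma pauliGroup_unitary {P : Mat d n} (hP : P ∈ pauliGroup d n) :
    P ∈ unitary (Mat d n) := by
  rw [mem_pauliGroup_iff] at hP
  obtain ⟨z, a, rfl⟩ := hP
  constructor
  · rw [Matrix.star_eq_conjTranspose, Matrix.conjTranspose_smul, Matrix.smul_mul,
      Matrix.mul_smul, smul_smul, Weyl_star_mul_self, mul_comm, tau_zpow_mul_conj, one_smul]
  · rw [Matrix.star_eq_conjTranspose, Matrix.conjTranspose_smul, Matrix.smul_mul,
      Matrix.mul_smul, smul_smul, Weyl_mul_star_self, tau_zpow_mul_conj, one_smul]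

lemma cliff_unitary {m : ℕ} (hm : 1 ≤ m) {V : Mat d n} (hV : V ∈ cliff d n m) :
    V ∈ unitary (Mat d n) := by
  match m, hm with
  | 1, _ => exact pauliGroup_unitary d n hV
  | (m+2), _ => exact hV.1

lemma pauli_conj_cliff (m : ℕ) :
    ∀ P ∈ pauliGroup d n, ∀ V ∈ cliff d n m, P * V * Pᴴ ∈ cliff d n m := by
  induction m using Nat.strong_induction_on with
  | _ m ih =>
  match m with
  | 0 =>
    rintro P hP V ⟨θ, rfl⟩
    refine ⟨θ, ?_⟩
    have hPu := pauliGroup_unitary d n hP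
    rw [Matrix.mul_smul, Matrix.mul_one, Matrix.smul_mul,
      show P * Pᴴ = 1 from Matrix.star_eq_conjTranspose P ▸ hPu.2]
  | 1 =>
    intro P hP V hV
    exact pauliGroup_mul d n (pauliGroup_mul d n hP hV) (pauliGroup_star d n hP)
  | (m+2) =>
    intro P hP V hV
    have hPu := pauliGroup_unitary d n hP
    refine ⟨mul_mem (mul_mem hPu hV.1) (Unitary.star_mem hPu), ?_⟩
    intro Q hQ
    have key : P * V * Pᴴ * Q * (P * V * Pᴴ)ᴴ
        = P * (V * (Pᴴ * Q * (Pᴴ)ᴴ) * Vᴴ) * Pᴴ := by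
      rw [Matrix.conjTranspose_mul, Matrix.conjTranspose_mul, Matrix.conjTranspose_conjTranspose]
      simp only [Matrix.mul_assoc]
    rw [key]
    have hQ' : Pᴴ * Q * (Pᴴ)ᴴ ∈ pauliGroup d n :=
      pauliGroup_mul d n (pauliGroup_mul d n (pauliGroup_star d n hP) hQ)
        (pauliGroup_star d n (pauliGroup_star d n hP))
    exact ih (m+1) (by omega) P hP _ (hV.2 _ hQ')

lemma pauli_mul_cliff {m : ℕ} (hm : 1 ≤ m) {P V : Mat d n}
    (hP : P ∈ pauliGroup d n) (hV : V ∈ cliff d n m) : P * V ∈ cliff d n m := by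
  match m, hm with
  | 1, _ => exact pauliGroup_mul d n hP hV
  | (m+2), _ =>
    refine ⟨mul_mem (pauliGroup_unitary d n hP) hV.1, ?_⟩
    intro Q hQ
    have key : P * V * Q * (P * V)ᴴ = P * (V * Q * Vᴴ) * Pᴴ := by
      rw [Matrix.conjTranspose_mul]
      simp only [Matrix.mul_assoc]
    rw [key]
    exact pauli_conj_cliff d n (m+1) P hP _ (hV.2 _ hQ)

lemma pderiv_pauli {P : Mat d n} (hP : P ∈ pauliGroup d n) (h : PSpace d n) :
    ∃ θ : ℝ, pderiv d n h P = Complex.exp ((θ : ℝ) * Complex.I) • 1 := by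
  rw [mem_pauliGroup_iff] at hP
  obtain ⟨z, a, rfl⟩ := hP
  obtain ⟨z1, hz1⟩ := Weyl_mul d n h a
  obtain ⟨z2, hz2⟩ := Weyl_conjTranspose d n h
  obtain ⟨z3, hz3⟩ := Weyl_conjTranspose d n a
  obtain ⟨z4, hz4⟩ := Weyl_mul d n (h + a) (-h)
  obtain ⟨z5, hz5⟩ := Weyl_mul d n (h + a + -h) (-a)
  have hcan : h + a + -h + -a = 0 := by abel
  rw [hcan, Weyl_zero] at hz5
  rw [pderiv, Matrix.conjTranspose_smul,
    show (star (tau d ^ z) : ℂ) = tau d ^ (-z) from conj_tau_zpow d z, hz2, hz3]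
  simp only [Matrix.mul_smul, Matrix.smul_mul, smul_smul]
  rw [hz1]
  simp only [Matrix.mul_smul, Matrix.smul_mul, smul_smul]
  rw [hz4]
  simp only [Matrix.mul_smul, Matrix.smul_mul, smul_smul]
  rw [hz5]
  simp only [smul_smul]
  simp only [← zpow_add₀ (tau_ne_zero d)]
  exact (tau_zpow_eq_exp_real d _).imp fun θ hθ => by rw [hθ]

lemma pderiv_cliff {m : ℕ} {V : Mat d n} (hV : V ∈ cliff d n (m+1)) (h : PSpace d n) :
    pderiv d n h V ∈ cliff d n m := by
  match m with
  | 0 =>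
    obtain ⟨θ, hθ⟩ := pderiv_pauli d n hV h
    exact ⟨θ, hθ⟩
  | (m+1) =>
    have hWh : (Weyl d n h)ᴴ ∈ pauliGroup d n :=
      pauliGroup_star d n (Weyl_mem_pauliGroup d n h)
    have hinner : V * (Weyl d n h)ᴴ * Vᴴ ∈ cliff d n (m+1) := hV.2 _ hWh
    have key : pderiv d n h V = Weyl d n h * (V * (Weyl d n h)ᴴ * Vᴴ) := by
      rw [pderiv]
      simp only [Matrix.mul_assoc]
    rw [key]
    exact pauli_mul_cliff d n (by omega) (Weyl_mem_pauliGroup d n h) hinner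

-- entry lemmas ------------------------------------------------------------

lemma Xop_mul_apply (v : Fin n → ZMod d) (B : Mat d n) (a b : Fin n → ZMod d) :
    (Xop d n v * B) a b = B (a - v) b := by
  rw [Matrix.mul_apply, Finset.sum_eq_single (a - v)]
  · show (if a = a - v + v then (1:ℂ) else 0) * B (a - v) b = B (a - v) b
    rw [if_pos (by abel), one_mul]
  · intro c _ hc
    show (if a = c + v then (1:ℂ) else 0) * B c b = 0
    rw [if_neg (fun hac => hc (by rw [hac]; abel)), zero_mul]
  · intro hm
    exact absurd (Finset.mem_univ _) hm

lemma mul_Xop_apply (v : Fin n → ZMod d) (B : Mat d n) (a b : Fin n → ZMod d) :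
    (B * Xop d n v) a b = B a (b + v) := by
  rw [Matrix.mul_apply, Finset.sum_eq_single (b + v)]
  · show B a (b + v) * (if b + v = b + v then (1:ℂ) else 0) = B a (b + v)
    rw [if_pos rfl, mul_one]
  · intro c _ hc
    show B a c * (if c = b + v then (1:ℂ) else 0) = 0
    rw [if_neg hc, mul_zero]
  · intro hm
    exact absurd (Finset.mem_univ _) hm

lemma Zop_mul_apply (u : Fin n → ZMod d) (B : Mat d n) (a b : Fin n → ZMod d) :
    (Zop d n u * B) a b = ze d (∑ i, a i * u i) * B a b := by
  rw [Zop_eq, Matrix.diagonal_mul]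

lemma mul_Zop_apply (u : Fin n → ZMod d) (B : Mat d n) (a b : Fin n → ZMod d) :
    (B * Zop d n u) a b = B a b * ze d (∑ i, b i * u i) := by
  rw [Zop_eq, Matrix.mul_diagonal]

lemma conj_Weyl_apply (h : PSpace d n) (A : Mat d n) (x y : Fin n → ZMod d) :
    (Weyl d n h * A * (Weyl d n h)ᴴ) x y
      = ze d (∑ i, (x i - y i) * h.1 i) * A (x - h.2) (y - h.2) := by
  have hscal : Weyl d n h * A * (Weyl d n h)ᴴ
      = (Zop d n h.1 * Xop d n h.2) * A * (Xop d n (-h.2) * Zop d n (-h.1)) := by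
    rw [Weyl_eq, Matrix.conjTranspose_smul, Matrix.smul_mul, Matrix.smul_mul, Matrix.mul_smul,
      smul_smul, Matrix.conjTranspose_mul, Zop_conjTranspose, Xop_conjTranspose,
      show (star (tau d ^ (-sph d n h)) : ℂ) = (starRingEnd ℂ) (tau d ^ (-sph d n h)) from rfl,
      conj_tau_zpow, mul_comm, ← zpow_add₀ (tau_ne_zero d)]
    simp
  rw [hscal]
  rw [show (Zop d n h.1 * Xop d n h.2) * A * (Xop d n (-h.2) * Zop d n (-h.1))
      = Zop d n h.1 * ((Xop d n h.2 * A * Xop d n (-h.2)) * Zop d n (-h.1)) by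
    simp only [Matrix.mul_assoc]]
  rw [Zop_mul_apply, mul_Zop_apply, mul_Xop_apply, Xop_mul_apply]
  rw [show y + -h.2 = y - h.2 by abel]
  rw [ip_neg_right]
  have hz : ze d (∑ i, (x i - y i) * h.1 i)
      = ze d (∑ i, x i * h.1 i) * ze d (-(∑ i, y i * h.1 i)) := by
    rw [← ze_add, ← Finset.sum_neg_distrib, ← Finset.sum_add_distrib]
    exact congrArg (ze d) (Finset.sum_congr rfl fun i _ => by ring)
  rw [hz]
  ring

lemma card_fun_eq : (Fintype.card (Fin n → ZMod d) : ℂ) = (d:ℂ)^n := by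
  rw [Fintype.card_fun, ZMod.card, Fintype.card_fin]
  push_cast
  ring

lemma twirl (hd : d.Prime) (A : Mat d n) :
    ∑ h : PSpace d n, Weyl d n h * A * (Weyl d n h)ᴴ = ((d:ℂ)^n * A.trace) • 1 := by
  ext x y
  rw [Matrix.sum_apply]
  simp only [conj_Weyl_apply]
  rw [Fintype.sum_prod_type]
  have hfac : ∀ u : Fin n → ZMod d,
      ∑ v : Fin n → ZMod d, ze d (∑ i, (x i - y i) * u i) * A (x - v) (y - v)
        = ze d (∑ i, (x i - y i) * u i) * ∑ v, A (x - v) (y - v) := by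
    intro u
    rw [Finset.mul_sum]
  simp only [hfac]
  rw [← Finset.sum_mul]
  simp only [← Pi.sub_apply x y]
  rw [show ∑ u : Fin n → ZMod d, ze d (∑ i, (x - y) i * u i)
      = if (x - y) = 0 then ((d : ℂ) ^ n) else 0 from sum_ze_ip d n hd (x - y)]
  rw [Matrix.smul_apply, Matrix.one_apply]
  by_cases hxy : x = y
  · subst hxy
    rw [if_pos (by simp), if_pos rfl]
    have htr : ∑ v : Fin n → ZMod d, A (x - v) (x - v) = A.trace := by
      rw [Matrix.trace]
      exact Fintype.sum_equiv (Equiv.subLeft x) _ _ (fun v => rfl)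
    rw [htr]
    simp [mul_comm]
  · rw [if_neg (fun hc => hxy (by rwa [sub_eq_zero] at hc)), if_neg hxy]
    simp

lemma dn_ne_zero : ((d:ℂ)^n) ≠ 0 := pow_ne_zero _ (d_ne_zero d)

lemma keyid (hd : d.Prime) (V U : Mat d n) :
    ((d : ℂ) ^ (2*n))⁻¹ * ∑ h : PSpace d n, trInner d n (pderiv d n h V) (pderiv d n h U)
      = (Complex.normSq (trInner d n V U) : ℂ) := by
  have h1 : ∀ h : PSpace d n, (pderiv d n h V)ᴴ * pderiv d n h U
      = V * (Weyl d n h * (Vᴴ * U) * (Weyl d n h)ᴴ) * Uᴴ := by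
    intro h
    rw [pderiv, pderiv]
    simp only [Matrix.conjTranspose_mul, Matrix.conjTranspose_conjTranspose, Matrix.mul_assoc]
    rw [show (Weyl d n h)ᴴ * (Weyl d n h * (U * ((Weyl d n h)ᴴ * Uᴴ)))
        = U * ((Weyl d n h)ᴴ * Uᴴ) by
      rw [← Matrix.mul_assoc, Weyl_star_mul_self, one_mul]]
  have h2 : ∑ h : PSpace d n, trInner d n (pderiv d n h V) (pderiv d n h U)
      = ((d:ℂ)^n)⁻¹ * ((d:ℂ)^n * (Vᴴ * U).trace * (V * Uᴴ).trace) := by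
    rw [show ∀ z : ℂ, ((d:ℂ)^n)⁻¹ * z = ((d:ℂ)^n)⁻¹ * z from fun z => rfl]
    simp only [trInner, h1]
    rw [← Finset.mul_sum]
    congr 1
    have h3 : ∑ h : PSpace d n, (V * (Weyl d n h * (Vᴴ * U) * (Weyl d n h)ᴴ) * Uᴴ).trace
        = (V * (∑ h : PSpace d n, Weyl d n h * (Vᴴ * U) * (Weyl d n h)ᴴ) * Uᴴ).trace := by
      rw [Matrix.mul_sum, Matrix.sum_mul, Matrix.trace_sum]
    rw [h3, twirl d n hd, Matrix.mul_smul, Matrix.smul_mul, Matrix.trace_smul, Matrix.mul_one]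
    simp only [smul_eq_mul, Matrix.trace_smul] <;> ring
  rw [h2]
  have h4 : (V * Uᴴ).trace = (starRingEnd ℂ) ((Vᴴ * U).trace) := by
    rw [show ((starRingEnd ℂ) ((Vᴴ * U).trace)) = star ((Vᴴ * U).trace) from rfl,
      ← Matrix.trace_conjTranspose, Matrix.conjTranspose_mul,
      Matrix.conjTranspose_conjTranspose, Matrix.trace_mul_comm]
  rw [h4]
  have h5 : (Complex.normSq (trInner d n V U) : ℂ)
      = trInner d n V U * (starRingEnd ℂ) (trInner d n V U) := (Complex.mul_conj _).symm
  rw [h5, trInner]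
  rw [_root_.map_mul, map_inv₀, map_pow, Complex.conj_natCast]
  rw [show (2*n) = n + n by ring, pow_add]
  have hdn := dn_ne_zero d n
  field_simp

lemma pq_zero' (A : Mat d n) : pq d n 0 A = ((d:ℂ)^n)⁻¹ * A.trace := by rw [pq]

lemma pq_succ' (k : ℕ) (A : Mat d n) :
    pq d n (k+1) A = ((d : ℂ) ^ (2*n))⁻¹ * ∑ h : PSpace d n, pq d n k (pderiv d n h A) := by
  rw [pq]

lemma pderiv_one (h : PSpace d n) : pderiv d n h (1 : Mat d n) = 1 := by
  rw [pderiv, Matrix.mul_one, Matrix.conjTranspose_one, Matrix.mul_one, Weyl_mul_star_self]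

lemma trInner_one (A : Mat d n) : trInner d n 1 A = ((d : ℂ) ^ n)⁻¹ * A.trace := by
  rw [trInner, Matrix.conjTranspose_one, Matrix.one_mul]

lemma pq_one (hd : d.Prime) (A : Mat d n) :
    pq d n 1 A = (Complex.normSq (trInner d n 1 A) : ℂ) := by
  have : pq d n 1 A
      = ((d : ℂ) ^ (2*n))⁻¹ * ∑ h : PSpace d n, trInner d n (pderiv d n h 1) (pderiv d n h A) := by
    rw [pq_succ' d n 0 A]
    refine congrArg (fun z => ((d : ℂ) ^ (2*n))⁻¹ * z)
      (Finset.sum_congr rfl fun h _ => ?_)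
    rw [pderiv_one, trInner_one, pq_zero']
  rw [this, keyid d n hd]

lemma pq_re_nonneg (hd : d.Prime) (k : ℕ) (hk : 1 ≤ k) (A : Mat d n) :
    (pq d n k A).im = 0 ∧ 0 ≤ (pq d n k A).re := by
  induction k generalizing A with
  | zero => omega
  | succ k ih =>
    match k, ih with
    | 0, _ =>
      rw [pq_one d n hd]
      constructor
      · exact Complex.ofReal_im _
      · rw [Complex.ofReal_re]
        exact Complex.normSq_nonneg _
    | (k+1), ih =>
      have hc : ((d:ℂ) ^ (2*n))⁻¹ = ((((d:ℝ) ^ (2*n))⁻¹ : ℝ) : ℂ) := by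
        push_cast
        ring
      have him : ∀ h : PSpace d n, (pq d n (k+1) (pderiv d n h A)).im = 0 :=
        fun h => (ih (by omega) _).1
      have hre : ∀ h : PSpace d n, 0 ≤ (pq d n (k+1) (pderiv d n h A)).re :=
        fun h => (ih (by omega) _).2
      rw [pq_succ', hc]
      constructor
      · rw [Complex.mul_im, Complex.ofReal_re, Complex.ofReal_im, Complex.im_sum, zero_mul,
          add_zero, Finset.sum_eq_zero fun h _ => him h, mul_zero]
      · rw [Complex.mul_re, Complex.ofReal_re, Complex.ofReal_im, Complex.re_sum, zero_mul,
          sub_zero]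
        have h0 : 0 ≤ ∑ h : PSpace d n, (pq d n (k+1) (pderiv d n h A)).re :=
          Finset.sum_nonneg fun h _ => hre h
        positivity

-- power mean inequality ----------------------------------------------------

lemma avg_sq_le {ι : Type*} [Fintype ι] (hc : 0 < (Fintype.card ι : ℝ)) (x : ι → ℝ) :
    ((Fintype.card ι : ℝ)⁻¹ * ∑ i, x i)^2 ≤ (Fintype.card ι : ℝ)⁻¹ * ∑ i, (x i)^2 := by
  have h : (∑ i, x i)^2 ≤ (Fintype.card ι : ℝ) * ∑ i, (x i)^2 := by
    have := sq_sum_le_card_mul_sum_sq (s := (Finset.univ : Finset ι)) (f := x)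
    simpa [Finset.card_univ] using this
  calc ((Fintype.card ι : ℝ)⁻¹ * ∑ i, x i)^2
      = ((Fintype.card ι : ℝ)⁻¹)^2 * (∑ i, x i)^2 := by ring
    _ ≤ ((Fintype.card ι : ℝ)⁻¹)^2 * ((Fintype.card ι : ℝ) * ∑ i, (x i)^2) := by
        apply mul_le_mul_of_nonneg_left h (by positivity)
    _ = ((Fintype.card ι : ℝ)⁻¹ * (Fintype.card ι : ℝ)) * ((Fintype.card ι : ℝ)⁻¹ * ∑ i, (x i)^2) := by
        ring
    _ = (Fintype.card ι : ℝ)⁻¹ * ∑ i, (x i)^2 := by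
        rw [inv_mul_cancel₀ hc.ne', one_mul]

lemma avg_pow_le {ι : Type*} [Fintype ι] (hc : 0 < (Fintype.card ι : ℝ)) (t : ℕ) :
    ∀ x : ι → ℝ, (∀ i, 0 ≤ x i) →
    ((Fintype.card ι : ℝ)⁻¹ * ∑ i, x i)^(2^t) ≤ (Fintype.card ι : ℝ)⁻¹ * ∑ i, (x i)^(2^t) := by
  induction t with
  | zero => intro x hx; simp
  | succ t ih =>
    intro x hx
    have h1 : ((Fintype.card ι : ℝ)⁻¹ * ∑ i, x i)^(2^(t+1))
        = (((Fintype.card ι : ℝ)⁻¹ * ∑ i, x i)^2)^(2^t) := by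
      rw [← pow_mul, show 2 * 2^t = 2^(t+1) by ring]
    have h2 : (((Fintype.card ι : ℝ)⁻¹ * ∑ i, x i)^2)^(2^t)
        ≤ ((Fintype.card ι : ℝ)⁻¹ * ∑ i, (x i)^2)^(2^t) := by
      apply pow_le_pow_left₀ (by positivity) (avg_sq_le hc x)
    have h3 : ((Fintype.card ι : ℝ)⁻¹ * ∑ i, (x i)^2)^(2^t)
        ≤ (Fintype.card ι : ℝ)⁻¹ * ∑ i, ((x i)^2)^(2^t) :=
      ih (fun i => (x i)^2) (fun i => sq_nonneg _)
    have h4 : ∀ i, ((x i)^2)^(2^t) = (x i)^(2^(t+1)) := fun i => by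
      rw [← pow_mul, show 2 * 2^t = 2^(t+1) by ring]
    rw [h1]
    refine le_trans h2 (le_trans h3 (le_of_eq ?_))
    congr 1
    exact Finset.sum_congr rfl fun i _ => h4 i

-- Cauchy-Schwarz bound ------------------------------------------------------

lemma sum_abs_sq_of_unitary {V : Mat d n} (hV : V ∈ unitary (Mat d n)) :
    ∑ p : (Fin n → ZMod d) × (Fin n → ZMod d), ‖V p.2 p.1‖^2 = (d:ℝ)^n := by
  have hV1 : Vᴴ * V = 1 := by
    have := hV.1
    rwa [Matrix.star_eq_conjTranspose] at this
  have h1 : ((Vᴴ * V).trace)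
      = ∑ p : (Fin n → ZMod d) × (Fin n → ZMod d), (starRingEnd ℂ) (V p.2 p.1) * V p.2 p.1 := by
    rw [Matrix.trace, Fintype.sum_prod_type]
    simp [Matrix.diag, Matrix.mul_apply, Matrix.conjTranspose_apply]
  have h2 : ((Vᴴ * V).trace) = ((d:ℂ))^n := by
    rw [hV1, Matrix.trace_one, ← card_fun_eq d n]
  have h3' : ∀ p : (Fin n → ZMod d) × (Fin n → ZMod d),
      ((‖V p.2 p.1‖^2 : ℝ) : ℂ) = (starRingEnd ℂ) (V p.2 p.1) * V p.2 p.1 := by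
    intro p
    calc ((‖V p.2 p.1‖^2 : ℝ) : ℂ) = ((Complex.normSq (V p.2 p.1) : ℝ) : ℂ) := by
          rw [Complex.sq_norm]
      _ = V p.2 p.1 * (starRingEnd ℂ) (V p.2 p.1) := (Complex.mul_conj _).symm
      _ = (starRingEnd ℂ) (V p.2 p.1) * V p.2 p.1 := mul_comm _ _
  have h3 : (((∑ p : (Fin n → ZMod d) × (Fin n → ZMod d), ‖V p.2 p.1‖^2 : ℝ)) : ℂ)
      = (((d:ℝ)^n : ℝ) : ℂ) := by
    rw [Complex.ofReal_sum, Finset.sum_congr rfl (fun p _ => h3' p), ← h1, h2]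
    push_cast
    ring
  exact_mod_cast h3

lemma abs_trace_le {V U : Mat d n} (hV : V ∈ unitary (Mat d n)) (hU : U ∈ unitary (Mat d n)) :
    ‖(Vᴴ * U).trace‖ ≤ (d:ℝ)^n := by
  set ι := (Fin n → ZMod d) × (Fin n → ZMod d)
  have h1 : (Vᴴ * U).trace = ∑ p : ι, (starRingEnd ℂ) (V p.2 p.1) * U p.2 p.1 := by
    rw [Matrix.trace, Fintype.sum_prod_type]
    simp [Matrix.diag, Matrix.mul_apply, Matrix.conjTranspose_apply]
  have h2 : ‖(Vᴴ * U).trace‖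
      ≤ ∑ p : ι, ‖V p.2 p.1‖ * ‖U p.2 p.1‖ := by
    rw [h1]
    refine le_trans (norm_sum_le _ _) (le_of_eq ?_)
    refine Finset.sum_congr rfl fun p _ => ?_
    rw [norm_mul, Complex.norm_conj]
  have h3 : (∑ p : ι, ‖V p.2 p.1‖ * ‖U p.2 p.1‖)^2
      ≤ (∑ p : ι, ‖V p.2 p.1‖^2) * ∑ p : ι, ‖U p.2 p.1‖^2 :=
    Finset.sum_mul_sq_le_sq_mul_sq _ _ _
  rw [sum_abs_sq_of_unitary d n hV, sum_abs_sq_of_unitary d n hU] at h3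
  have h4 : (∑ p : ι, ‖V p.2 p.1‖ * ‖U p.2 p.1‖) ≤ (d:ℝ)^n := by
    have hsnn : 0 ≤ ∑ p : ι, ‖V p.2 p.1‖ * ‖U p.2 p.1‖ :=
      Finset.sum_nonneg fun p _ => mul_nonneg (norm_nonneg _) (norm_nonneg _)
    nlinarith [pow_pos (show (0:ℝ) < (d:ℝ) from by exact_mod_cast (NeZero.pos d)) n]
  exact le_trans h2 h4

lemma normSq_trInner_le_one {V U : Mat d n} (hV : V ∈ unitary (Mat d n))
    (hU : U ∈ unitary (Mat d n)) : Complex.normSq (trInner d n V U) ≤ 1 := by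
  have hdp : (0:ℝ) < (d:ℝ)^n := pow_pos (by exact_mod_cast (NeZero.pos d)) n
  have habs : ‖trInner d n V U‖ ≤ 1 := by
    rw [trInner, norm_mul, norm_inv]
    have : ‖(d:ℂ)^n‖ = (d:ℝ)^n := by
      rw [norm_pow, Complex.norm_natCast]
    rw [this]
    calc ((d:ℝ)^n)⁻¹ * ‖(Vᴴ * U).trace‖
        ≤ ((d:ℝ)^n)⁻¹ * (d:ℝ)^n := by
          apply mul_le_mul_of_nonneg_left (abs_trace_le d n hV hU) (by positivity)
      _ = 1 := inv_mul_cancel₀ hdp.ne'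
  rw [← Complex.sq_norm]
  nlinarith [norm_nonneg (trInner d n V U)]

lemma card_pspace : (Fintype.card (PSpace d n) : ℝ) = (d:ℝ)^(2*n) := by
  rw [Fintype.card_prod, Fintype.card_fun, ZMod.card, Fintype.card_fin]
  push_cast
  rw [two_mul, pow_add]

lemma card_pspace_pos : 0 < (Fintype.card (PSpace d n) : ℝ) := by
  rw [card_pspace]
  have hd0 : (0:ℝ) < (d:ℝ) := by exact_mod_cast NeZero.pos d
  positivity

lemma pq_succ_re (k : ℕ) (A : Mat d n) :
    (pq d n (k+1) A).re = ((d:ℝ)^(2*n))⁻¹ * ∑ h : PSpace d n, (pq d n k (pderiv d n h A)).re := by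
  have hc : ((d:ℂ) ^ (2*n))⁻¹ = ((((d:ℝ) ^ (2*n))⁻¹ : ℝ) : ℂ) := by
    push_cast
    ring
  rw [pq_succ', hc, Complex.mul_re, Complex.ofReal_re, Complex.ofReal_im, Complex.re_sum,
    zero_mul, sub_zero]

lemma claim (hd : d.Prime) :
    ∀ (m : ℕ) (V : Mat d n), V ∈ cliff d n m → ∀ U : Mat d n,
    (Complex.normSq (trInner d n V U))^(2^m) ≤ (pq d n (m+1) U).re := by
  intro m
  induction m with
  | zero =>
    rintro V ⟨θ, rfl⟩ U
    have h1 : trInner d n (Complex.exp ((θ:ℝ) * Complex.I) • 1) U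
        = (starRingEnd ℂ) (Complex.exp ((θ:ℝ) * Complex.I)) * trInner d n 1 U := by
      rw [trInner, trInner, Matrix.conjTranspose_smul, Matrix.smul_mul, Matrix.trace_smul,
        smul_eq_mul]
      simp only [starRingEnd_apply]
      ring
    have h2 : Complex.normSq (Complex.exp ((θ:ℝ) * Complex.I)) = 1 := by
      rw [← Complex.sq_norm, Complex.norm_exp_ofReal_mul_I]
      norm_num
    rw [h1, Complex.normSq_mul, Complex.normSq_conj, h2, one_mul, pow_zero, pow_one]
    rw [pq_one d n hd U, Complex.ofReal_re]
  | succ m ih =>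
    intro V hV U
    set c0 : ℝ := ((d:ℝ)^(2*n))⁻¹ with hc0
    have hc0nn : 0 ≤ c0 := by positivity
    have hcard : (Fintype.card (PSpace d n) : ℝ)⁻¹ = c0 := by
      rw [card_pspace]
    -- step 1
    have hre : Complex.normSq (trInner d n V U)
        = c0 * ∑ h : PSpace d n, (trInner d n (pderiv d n h V) (pderiv d n h U)).re := by
      have hkey := congrArg Complex.re (keyid d n hd V U)
      rw [Complex.ofReal_re] at hkey
      have hc : ((d:ℂ) ^ (2*n))⁻¹ = ((c0 : ℝ) : ℂ) := by
        rw [hc0]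
        push_cast
        ring
      rw [hc, Complex.mul_re, Complex.ofReal_re, Complex.ofReal_im, Complex.re_sum, zero_mul,
        sub_zero] at hkey
      exact hkey.symm
    have hstep1 : Complex.normSq (trInner d n V U)
        ≤ c0 * ∑ h : PSpace d n, ‖trInner d n (pderiv d n h V) (pderiv d n h U)‖ := by
      rw [hre]
      apply mul_le_mul_of_nonneg_left _ hc0nn
      exact Finset.sum_le_sum fun h _ => Complex.re_le_norm _
    -- step 2 + 3
    have hstep2 : (Complex.normSq (trInner d n V U))^(2^(m+1))
        ≤ c0 * ∑ h : PSpace d n,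
            (‖trInner d n (pderiv d n h V) (pderiv d n h U)‖)^(2^(m+1)) := by
      refine le_trans (pow_le_pow_left₀ (Complex.normSq_nonneg _) hstep1 _) ?_
      rw [← hcard]
      exact avg_pow_le (card_pspace_pos d n) (m+1) _ (fun h => norm_nonneg _)
    -- step 4 + 5
    have hstep3 : ∀ h : PSpace d n,
        (‖trInner d n (pderiv d n h V) (pderiv d n h U)‖)^(2^(m+1))
          ≤ (pq d n (m+1) (pderiv d n h U)).re := by
      intro h
      have h4 : (‖trInner d n (pderiv d n h V) (pderiv d n h U)‖)^(2^(m+1))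
          = (Complex.normSq (trInner d n (pderiv d n h V) (pderiv d n h U)))^(2^m) := by
        rw [← Complex.sq_norm, ← pow_mul, show 2 * 2^m = 2^(m+1) by ring]
      rw [h4]
      exact ih (pderiv d n h V) (pderiv_cliff d n hV h) (pderiv d n h U)
    calc (Complex.normSq (trInner d n V U))^(2^(m+1))
        ≤ c0 * ∑ h : PSpace d n,
            (‖trInner d n (pderiv d n h V) (pderiv d n h U)‖)^(2^(m+1)) := hstep2
      _ ≤ c0 * ∑ h : PSpace d n, (pq d n (m+1) (pderiv d n h U)).re := by
          apply mul_le_mul_of_nonneg_left _ hc0nn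
          exact Finset.sum_le_sum fun h _ => hstep3 h
      _ = (pq d n (m+1+1) U).re := (pq_succ_re d n (m+1) U).symm

end Lemmas

theorem stmt11 (d n : ℕ) [NeZero d] (hd : d.Prime) (hn : 1 ≤ n)
    (k : ℕ) (hk : 2 ≤ k) (U : Mat d n) (hU : U ∈ unitary (Mat d n)) :
    (pq d n k U).im = 0 ∧ 0 ≤ (pq d n k U).re ∧
    ∀ V ∈ cliff d n (k - 1),
      (‖trInner d n V U‖ ^ 2) ^ (2 ^ k) ≤ (pq d n k U).re ∧
      ‖trInner d n V U‖ ^ 2 ≤ pnorm d n k U := by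
  obtain ⟨him, hre⟩ := pq_re_nonneg d n hd k (by omega) U
  refine ⟨him, hre, ?_⟩
  intro V hV
  have hk1 : k - 1 + 1 = k := by omega
  have hcl := claim d n hd (k-1) V hV U
  rw [hk1] at hcl
  have hVu : V ∈ unitary (Mat d n) := cliff_unitary d n (by omega : 1 ≤ k - 1) hV
  set F : ℝ := ‖trInner d n V U‖ ^ 2 with hF
  have hFnormSq : F = Complex.normSq (trInner d n V U) := Complex.sq_norm _
  have hFnn : 0 ≤ F := by rw [hF]; positivity
  have hFle1 : F ≤ 1 := by
    rw [hFnormSq]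
    exact normSq_trInner_le_one d n hVu hU
  have hmono : F ^ (2^k) ≤ F ^ (2^(k-1)) := by
    apply pow_le_pow_of_le_one hFnn hFle1
    exact Nat.pow_le_pow_right (by norm_num) (by omega)
  have hpart1 : F ^ (2^k) ≤ (pq d n k U).re := by
    refine le_trans hmono ?_
    rw [hFnormSq]
    exact hcl
  refine ⟨hpart1, ?_⟩
  -- second part via 2^k-th root
  have hrpow : (F ^ ((2:ℕ)^k)) ^ (((2:ℝ)^k)⁻¹) ≤ ((pq d n k U).re) ^ (((2:ℝ)^k)⁻¹) :=
    Real.rpow_le_rpow (by positivity) hpart1 (by positivity)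
  have hcollapse : (F ^ ((2:ℕ)^k)) ^ (((2:ℝ)^k)⁻¹) = F := by
    rw [← Real.rpow_natCast F (2^k), ← Real.rpow_mul hFnn]
    rw [show (((2:ℕ)^k : ℕ) : ℝ) * (((2:ℝ)^k)⁻¹) = 1 by
      push_cast
      field_simp]
    exact Real.rpow_one F
  rw [pnorm, ← hcollapse]
  exact hrpow

end CH
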